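/- Let P ∈ ℂ[x][y, y⁻¹] be a Laurent polynomial with con(P) = P, and suppose P = C · y^p · P₁^{r₁} where C ∈ ℂ, p ∈ ℤ, and P₁ ∈ ℂ[x,y] is not divisible by y. Then there exist a constant C₁ ∈ ℂ and an integer p₁ such that P₁ = C₁ · y^{p₁} · con(P₁). -/

import Mathlib

open LaurentPolynomial

/-- Conjugation on Laurent polynomials over `ℂ[x]`:
`con (Σⱼ aⱼ(x) yᵛʲ) = Σⱼ conj(aⱼ)(x) y⁻ᵛʲ`. -/
noncomputable def con (P : LaurentPolynomial (Polynomial ℂ)) :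
    LaurentPolynomial (Polynomial ℂ) :=
  AddMonoidAlgebra.ofCoeff (Finsupp.mapRange (Polynomial.map (starRingEnd ℂ)) (Polynomial.map_zero _)
    (Finsupp.equivMapDomain (Equiv.neg ℤ) P.coeff))

/-- Evaluate a Laurent polynomial `P(x,y) = Σⱼ aⱼ(x) yᵛʲ` at `y = e^{ivx}`, `x` real. -/
noncomputable def evalLR (P : LaurentPolynomial (Polynomial ℂ)) (v : ℚ) (x : ℝ) : ℂ :=
  ∑ n ∈ P.coeff.support, Polynomial.eval (x : ℂ) (P.coeff n) * Complex.exp (Complex.I * v * x) ^ n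

lemma con_apply (f : LaurentPolynomial (Polynomial ℂ)) (m : ℤ) :
    (con f).coeff m = (f.coeff (-m)).map (starRingEnd ℂ) := by
  rw [con, AddMonoidAlgebra.coeff_ofCoeff, Finsupp.mapRange_apply, Finsupp.equivMapDomain_apply]
  rfl

noncomputable def conHom :
    LaurentPolynomial (Polynomial ℂ) →+* LaurentPolynomial (Polynomial ℂ) :=
  AddMonoidAlgebra.liftNCRingHom
    ((LaurentPolynomial.C).comp (Polynomial.mapRingHom (starRingEnd ℂ)))
    { toFun := fun n => T (-(Multiplicative.toAdd n))
      map_one' := by simp [T_zero]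
      map_mul' := fun a b => by
        simp only [toAdd_mul, neg_add, T_add] }
    (fun _ _ => Commute.all _ _)

lemma con_single (n : ℤ) (a : Polynomial ℂ) :
    con (AddMonoidAlgebra.single n a) = AddMonoidAlgebra.single (-n) (a.map (starRingEnd ℂ)) := by
  refine AddMonoidAlgebra.ext (Finsupp.ext fun m => ?_)
  rw [con_apply, AddMonoidAlgebra.coeff_single, AddMonoidAlgebra.coeff_single,
    Finsupp.single_apply, Finsupp.single_apply]
  by_cases h : -n = m
  · rw [if_pos h, if_pos (by omega : n = -m)]
  · rw [if_neg h, if_neg (by omega : ¬ n = -m), Polynomial.map_zero]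

lemma con_eq (f : LaurentPolynomial (Polynomial ℂ)) : con f = conHom f := by
  induction f using AddMonoidAlgebra.induction_linear with
  | zero =>
      rw [map_zero]
      refine AddMonoidAlgebra.ext (Finsupp.ext fun m => ?_)
      rw [con_apply]
      simp
  | add f g hf hg =>
      have : con (f + g) = con f + con g := by
        refine AddMonoidAlgebra.ext (Finsupp.ext fun m => ?_)
        rw [AddMonoidAlgebra.coeff_add, Finsupp.add_apply, con_apply, con_apply, con_apply,
          AddMonoidAlgebra.coeff_add, Finsupp.add_apply,
          Polynomial.map_add]
      rw [this, map_add, hf, hg]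
  | single n a =>
      rw [con_single]
      show _ = AddMonoidAlgebra.liftNC _ _ (AddMonoidAlgebra.single n a)
      rw [AddMonoidAlgebra.liftNC_single]
      simp only [RingHom.coe_comp, Function.comp_apply, Polynomial.coe_mapRingHom,
        MonoidHom.coe_mk, OneHom.coe_mk, toAdd_ofAdd]
      rw [single_eq_C_mul_T]
      rfl

lemma con_mul (f g : LaurentPolynomial (Polynomial ℂ)) :
    con (f * g) = con f * con g := by rw [con_eq, con_eq, con_eq, map_mul]

lemma con_pow (f : LaurentPolynomial (Polynomial ℂ)) (n : ℕ) :
    con (f ^ n) = con f ^ n := by rw [con_eq, con_eq, map_pow]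

lemma con_C (a : Polynomial ℂ) :
    con (LaurentPolynomial.C a) = LaurentPolynomial.C (a.map (starRingEnd ℂ)) := by
  have h : (LaurentPolynomial.C a : LaurentPolynomial (Polynomial ℂ)) =
      (AddMonoidAlgebra.single 0 a : LaurentPolynomial (Polynomial ℂ)) := by
    rw [single_eq_C_mul_T, T_zero, mul_one]
  have h2 : (LaurentPolynomial.C (a.map (starRingEnd ℂ)) : LaurentPolynomial (Polynomial ℂ)) =
      AddMonoidAlgebra.single 0 (a.map (starRingEnd ℂ)) := by
    rw [single_eq_C_mul_T, T_zero, mul_one]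
  rw [h, con_single, neg_zero, h2]

lemma con_T (n : ℤ) : con (T n : LaurentPolynomial (Polynomial ℂ)) = T (-n) := by
  have h : (T n : LaurentPolynomial (Polynomial ℂ)) = AddMonoidAlgebra.single n 1 := rfl
  have h2 : (T (-n) : LaurentPolynomial (Polynomial ℂ)) = AddMonoidAlgebra.single (-n) 1 := rfl
  rw [h, con_single, Polynomial.map_one, h2]

lemma con_toLaurent (q : Polynomial (Polynomial ℂ)) :
    con (Polynomial.toLaurent q) =
      invert (Polynomial.toLaurent (q.map (Polynomial.mapRingHom (starRingEnd ℂ)))) := by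
  induction q using Polynomial.induction_on' with
  | add f g hf hg =>
      rw [Polynomial.map_add, map_add, map_add, map_add, ← hf, ← hg]
      rw [con_eq, con_eq, con_eq, map_add]
  | monomial n a =>
      rw [← Polynomial.C_mul_X_pow_eq_monomial, Polynomial.map_mul, Polynomial.map_pow,
        Polynomial.map_C, Polynomial.map_X, Polynomial.toLaurent_C_mul_X_pow,
        Polynomial.toLaurent_C_mul_X_pow, con_mul, con_C, con_T, map_mul,
        invert_C, invert_T]
      rfl
theorem stmt_6 (P : LaurentPolynomial (Polynomial ℂ)) (hP : con P = P)
    (C : ℂ) (hC : C ≠ 0) (p : ℤ) (r₁ : ℕ) (hr₁ : 1 ≤ r₁)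
    (P₁ : Polynomial (Polynomial ℂ)) (hy : ¬ (Polynomial.X ∣ P₁))
    (hfac : P = LaurentPolynomial.C (Polynomial.C C) * LaurentPolynomial.T p *
      (Polynomial.toLaurent P₁) ^ r₁) :
    ∃ (C₁ : ℂ) (p₁ : ℤ), Polynomial.toLaurent P₁ =
      LaurentPolynomial.C (Polynomial.C C₁) * LaurentPolynomial.T p₁ *
        con (Polynomial.toLaurent P₁) := by
  classical
  set F : Polynomial ℂ →+* Polynomial ℂ := Polynomial.mapRingHom (starRingEnd ℂ) with hF
  have hFinj : Function.Injective ⇑F := by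
    rw [hF, Polynomial.coe_mapRingHom]
    exact Polynomial.map_injective _ (RingHom.injective _)
  set Pm : Polynomial (Polynomial ℂ) := P₁.map F with hPm
  set Q : Polynomial (Polynomial ℂ) := Pm.reverse with hQdef
  set d : ℕ := Pm.natDegree with hd
  set A : LaurentPolynomial (Polynomial ℂ) := Polynomial.toLaurent P₁ with hA
  set B : LaurentPolynomial (Polynomial ℂ) := Polynomial.toLaurent Q with hB
  have hP₁ne : P₁ ≠ 0 := fun h => hy (h ▸ dvd_zero _)
  have hPmne : Pm ≠ 0 := fun h => hP₁ne (Polynomial.map_injective F hFinj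
    (by rw [Polynomial.map_zero]; exact h))
  have hQ0 : Q.coeff 0 ≠ 0 := by
    rw [hQdef, Polynomial.coeff_zero_reverse]
    exact Polynomial.leadingCoeff_ne_zero.2 hPmne
  -- con A expressed via B
  have hA_con : con A * T (d : ℤ) = B := by
    rw [hB, hQdef, toLaurent_reverse, hA, con_toLaurent]
  have hconA : con A = B * T (-(d : ℤ)) := by
    rw [← hA_con, mul_T_assoc, add_neg_cancel, T_zero, mul_one]
  -- conjugate the factorization
  have h1 : LaurentPolynomial.C (Polynomial.C C) * T p * A ^ r₁ =
      LaurentPolynomial.C (Polynomial.C ((starRingEnd ℂ) C)) * T (-p) * (con A) ^ r₁ := by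
    conv_lhs => rw [← hfac, ← hP, hfac]
    rw [con_mul, con_mul, con_pow, con_C, con_T, Polynomial.map_C]
  set k : ℤ := 2 * p + r₁ * d with hk
  have h3 : LaurentPolynomial.C (Polynomial.C C) * A ^ r₁ * T k =
      LaurentPolynomial.C (Polynomial.C ((starRingEnd ℂ) C)) * B ^ r₁ := by
    have h2 : LaurentPolynomial.C (Polynomial.C C) * T p * A ^ r₁ =
        LaurentPolynomial.C (Polynomial.C ((starRingEnd ℂ) C)) * T (-p) *
          (B ^ r₁ * T ((r₁ : ℤ) * (-(d : ℤ)))) := by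
      rw [h1, hconA, mul_pow, T_pow]
    have e1 : (T (-p) : LaurentPolynomial (Polynomial ℂ)) * T ((r₁ : ℤ) * (-(d : ℤ))) *
        T (p + (r₁ : ℤ) * d) = 1 := by
      rw [← T_add, ← T_add, show -p + (r₁ : ℤ) * (-(d : ℤ)) + (p + (r₁ : ℤ) * d) = 0 by ring,
        T_zero]
    calc LaurentPolynomial.C (Polynomial.C C) * A ^ r₁ * T k
        = (LaurentPolynomial.C (Polynomial.C C) * T p * A ^ r₁) * T (p + (r₁ : ℤ) * d) := by
          rw [show k = p + (p + (r₁ : ℤ) * d) by rw [hk]; ring, T_add]; ring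
      _ = (LaurentPolynomial.C (Polynomial.C ((starRingEnd ℂ) C)) * T (-p) *
            (B ^ r₁ * T ((r₁ : ℤ) * (-(d : ℤ))))) * T (p + (r₁ : ℤ) * d) := by rw [h2]
      _ = LaurentPolynomial.C (Polynomial.C ((starRingEnd ℂ) C)) * B ^ r₁ *
            (T (-p) * T ((r₁ : ℤ) * (-(d : ℤ))) * T (p + (r₁ : ℤ) * d)) := by ring
      _ = _ := by rw [e1, mul_one]
  have hCc : (starRingEnd ℂ) C ≠ 0 := by simpa using hC
  -- derive the polynomial identity with k = 0
  have heq : Polynomial.C (Polynomial.C C) * P₁ ^ r₁ =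
      Polynomial.C (Polynomial.C ((starRingEnd ℂ) C)) * Q ^ r₁ := by
    rcases le_or_gt 0 k with hk0 | hk0
    · -- k ≥ 0
      have hpoly : Polynomial.C (Polynomial.C C) * P₁ ^ r₁ * Polynomial.X ^ k.toNat =
          Polynomial.C (Polynomial.C ((starRingEnd ℂ) C)) * Q ^ r₁ := by
        apply Polynomial.toLaurent_injective
        simp only [map_mul, map_pow, Polynomial.toLaurent_C, Polynomial.toLaurent_X]
        rw [T_pow, mul_one, show ((k.toNat : ℤ)) = k from Int.toNat_of_nonneg hk0]
        exact h3
      have hkz : k.toNat = 0 := by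
        by_contra hne
        have hXdvd : Polynomial.X ∣
            Polynomial.C (Polynomial.C ((starRingEnd ℂ) C)) * Q ^ r₁ := by
          rw [← hpoly]
          exact Dvd.dvd.mul_left (dvd_pow_self _ hne) _
        rw [Polynomial.X_dvd_iff] at hXdvd
        have : (Polynomial.C (Polynomial.C ((starRingEnd ℂ) C)) * Q ^ r₁).coeff 0 =
            Polynomial.C ((starRingEnd ℂ) C) * (Q.coeff 0) ^ r₁ := by
          rw [Polynomial.mul_coeff_zero, Polynomial.coeff_C_zero]
          congr 1
          exact map_pow Polynomial.constantCoeff Q r₁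
        rw [this] at hXdvd
        exact (mul_ne_zero (Polynomial.C_ne_zero.2 hCc) (pow_ne_zero _ hQ0)) hXdvd
      rwa [hkz, pow_zero, mul_one] at hpoly
    · -- k < 0 : contradiction
      exfalso
      have h3' : LaurentPolynomial.C (Polynomial.C C) * A ^ r₁ =
          LaurentPolynomial.C (Polynomial.C ((starRingEnd ℂ) C)) * B ^ r₁ * T (-k) := by
        rw [← h3, mul_T_assoc, add_neg_cancel, T_zero, mul_one]
      have hpoly : Polynomial.C (Polynomial.C C) * P₁ ^ r₁ =
          Polynomial.C (Polynomial.C ((starRingEnd ℂ) C)) * Q ^ r₁ *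
            Polynomial.X ^ (-k).toNat := by
        apply Polynomial.toLaurent_injective
        simp only [map_mul, map_pow, Polynomial.toLaurent_C, Polynomial.toLaurent_X]
        rw [T_pow, mul_one, show (((-k).toNat : ℤ)) = -k by omega]
        exact h3'
      have hXdvd : Polynomial.X ∣ Polynomial.C (Polynomial.C C) * P₁ ^ r₁ := by
        rw [hpoly]
        exact Dvd.dvd.mul_left (dvd_pow_self _ (by omega : (-k).toNat ≠ 0)) _
      rcases (Polynomial.prime_X).2.2 _ _ hXdvd with h | h
      · rw [Polynomial.X_dvd_iff, Polynomial.coeff_C_zero] at h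
        exact Polynomial.C_ne_zero.2 hC h
      · exact hy ((Polynomial.prime_X).dvd_of_dvd_pow h)
  -- unit bookkeeping and taking r₁-th roots
  have hUC : IsUnit (Polynomial.C (Polynomial.C C) : Polynomial (Polynomial ℂ)) :=
    Polynomial.isUnit_C.2 (Polynomial.isUnit_C.2 hC.isUnit)
  have hUC' : IsUnit (Polynomial.C (Polynomial.C ((starRingEnd ℂ) C)) :
      Polynomial (Polynomial ℂ)) :=
    Polynomial.isUnit_C.2 (Polynomial.isUnit_C.2 hCc.isUnit)
  obtain ⟨u, hu⟩ := hUC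
  obtain ⟨u', hu'⟩ := hUC'
  have dvd1 : Q ^ r₁ ∣ P₁ ^ r₁ := by
    refine ⟨(↑u⁻¹ : Polynomial (Polynomial ℂ)) * Polynomial.C (Polynomial.C ((starRingEnd ℂ) C)),
      ?_⟩
    have h4 : (P₁ ^ r₁ : Polynomial (Polynomial ℂ)) =
        ↑u⁻¹ * (Polynomial.C (Polynomial.C ((starRingEnd ℂ) C)) * Q ^ r₁) :=
      (Units.eq_inv_mul_iff_mul_eq u).2 (by rw [hu]; exact heq)
    rw [h4]; ring
  have dvd2 : P₁ ^ r₁ ∣ Q ^ r₁ := by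
    refine ⟨(↑u'⁻¹ : Polynomial (Polynomial ℂ)) * Polynomial.C (Polynomial.C C), ?_⟩
    have h4 : (Q ^ r₁ : Polynomial (Polynomial ℂ)) =
        ↑u'⁻¹ * (Polynomial.C (Polynomial.C C) * P₁ ^ r₁) :=
      (Units.eq_inv_mul_iff_mul_eq u').2 (by rw [hu']; exact heq.symm)
    rw [h4]; ring
  have hr₁ne : r₁ ≠ 0 := by omega
  have hd1 : Q ∣ P₁ := (IsIntegrallyClosed.pow_dvd_pow_iff hr₁ne).1 dvd1
  have hd2 : P₁ ∣ Q := (IsIntegrallyClosed.pow_dvd_pow_iff hr₁ne).1 dvd2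
  obtain ⟨w, hw⟩ := associated_of_dvd_dvd hd2 hd1
  obtain ⟨q, hq, hq'⟩ := Polynomial.isUnit_iff.1 w.isUnit
  obtain ⟨c, hc, hc'⟩ := Polynomial.isUnit_iff.1 hq
  have hcne : c ≠ 0 := hc.ne_zero
  refine ⟨c⁻¹, (d : ℤ), ?_⟩
  have hQP : Q = P₁ * Polynomial.C (Polynomial.C c) := by
    rw [← hw, hc', hq']
  have hBA : B = A * LaurentPolynomial.C (Polynomial.C c) := by
    rw [hB, hQP, map_mul, Polynomial.toLaurent_C, hA]
  calc A = A * (LaurentPolynomial.C (Polynomial.C c⁻¹) *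
        LaurentPolynomial.C (Polynomial.C c)) := by
        rw [← map_mul, ← Polynomial.C_mul, inv_mul_cancel₀ hcne, map_one, map_one, mul_one]
    _ = LaurentPolynomial.C (Polynomial.C c⁻¹) * (A * LaurentPolynomial.C (Polynomial.C c)) := by
        ring
    _ = LaurentPolynomial.C (Polynomial.C c⁻¹) * B := by rw [hBA]
    _ = LaurentPolynomial.C (Polynomial.C c⁻¹) * (con A * T (d : ℤ)) := by rw [hA_con]
    _ = LaurentPolynomial.C (Polynomial.C c⁻¹) * T (d : ℤ) * con A := by ring
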